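/- Let g ∈ L¹([0,a]) and suppose that ∫₀ᵃ g(y) e^{-xy} dy = O(e^{-xa}) as x → ∞. Then g(y) = 0 for a.e. y ∈ [0,a]. -/

import Mathlib

open MeasureTheory

section LaplaceAux

open Set Filter Bornology Topology

variable {a : ℝ} {g : ℝ → ℝ}

noncomputable def lapPsi (a : ℝ) (g : ℝ → ℝ) (z : ℂ) : ℂ :=
  ∫ y in Set.Icc (0:ℝ) a, (g y : ℂ) * Complex.exp ((a - y : ℝ) * z)

lemma lap_exp_bound {a y : ℝ} (hy : y ∈ Set.Icc 0 a) (x : ℝ) :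
    (a - y) * x ≤ a * max x 0 := by
  rcases le_total x 0 with hx | hx
  · have h1 : (a - y) * x ≤ 0 := mul_nonpos_of_nonneg_of_nonpos (by linarith [hy.2]) hx
    have h2 : (0:ℝ) ≤ a * max x 0 := by
      have : max x 0 = 0 := max_eq_right hx
      rw [this, mul_zero]
    linarith
  · have : max x 0 = x := max_eq_left hx
    rw [this]
    exact mul_le_mul_of_nonneg_right (by linarith [hy.1]) hx

lemma lapPsi_integrand_norm {a y : ℝ} (g : ℝ → ℝ) (z : ℂ) :
    ‖(g y : ℂ) * Complex.exp ((a - y : ℝ) * z)‖ = |g y| * Real.exp ((a - y) * z.re) := by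
  rw [norm_mul, Complex.norm_exp]
  simp [Complex.norm_real]

lemma lapPsi_integrand_integrable {a : ℝ} {g : ℝ → ℝ}
    (hg : IntegrableOn g (Set.Icc 0 a)) (z : ℂ) :
    IntegrableOn (fun y => (g y : ℂ) * Complex.exp ((a - y : ℝ) * z)) (Set.Icc 0 a) := by
  have h1 : IntegrableOn (fun y => (g y : ℂ)) (Set.Icc 0 a) := hg.ofReal
  have hc : Continuous fun y : ℝ => Complex.exp ((a - y : ℝ) * z) := by
    fun_prop
  have := Integrable.bdd_mul (c := Real.exp (a * max z.re 0)) h1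
    hc.aestronglyMeasurable ?_
  · exact this.congr (Filter.Eventually.of_forall fun y => mul_comm _ _)
  · filter_upwards [ae_restrict_mem measurableSet_Icc] with y hy
    rw [Complex.norm_exp]
    have : ((a - y : ℝ) * z : ℂ).re = (a - y) * z.re := by
      simp
    rw [this]
    exact Real.exp_le_exp.2 (lap_exp_bound hy z.re)


-- norm bound
lemma lapPsi_norm_le (hg : IntegrableOn g (Set.Icc 0 a)) (z : ℂ) :
    ‖lapPsi a g z‖ ≤ (∫ y in Set.Icc (0:ℝ) a, |g y|) * Real.exp (a * max z.re 0) := by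
  have h1 : ‖lapPsi a g z‖ ≤ ∫ y in Set.Icc (0:ℝ) a, ‖(g y : ℂ) * Complex.exp ((a - y : ℝ) * z)‖ :=
    norm_integral_le_integral_norm _
  have h2 : ∫ y in Set.Icc (0:ℝ) a, ‖(g y : ℂ) * Complex.exp ((a - y : ℝ) * z)‖
      ≤ ∫ y in Set.Icc (0:ℝ) a, |g y| * Real.exp (a * max z.re 0) := by
    apply setIntegral_mono_on ((lapPsi_integrand_integrable hg z).norm)
      (hg.norm.mul_const _) measurableSet_Icc
    intro y hy
    rw [lapPsi_integrand_norm]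
    exact mul_le_mul_of_nonneg_left (Real.exp_le_exp.2 (lap_exp_bound hy z.re)) (abs_nonneg _)
  calc ‖lapPsi a g z‖ ≤ _ := h1
    _ ≤ _ := h2
    _ = (∫ y in Set.Icc (0:ℝ) a, |g y|) * Real.exp (a * max z.re 0) := by
        rw [integral_mul_const]

lemma lapPsi_ofReal (hg : IntegrableOn g (Set.Icc 0 a)) (x : ℝ) :
    lapPsi a g x = ((∫ y in Set.Icc (0:ℝ) a, g y * Real.exp ((a - y) * x) : ℝ) : ℂ) := by
  rw [lapPsi]
  calc ∫ y in Set.Icc (0:ℝ) a, (g y : ℂ) * Complex.exp ((a - y : ℝ) * x)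
      = ∫ y in Set.Icc (0:ℝ) a, ((g y * Real.exp ((a - y) * x) : ℝ) : ℂ) := by
        apply setIntegral_congr_fun measurableSet_Icc
        intro y _
        push_cast
        ring
    _ = _ := integral_ofReal

lemma lapPsi_differentiable (hg : IntegrableOn g (Set.Icc 0 a)) :
    Differentiable ℂ (lapPsi a g) := by
  intro z₀
  have key := hasDerivAt_integral_of_dominated_loc_of_deriv_le
    (μ := volume.restrict (Set.Icc (0:ℝ) a)) (x₀ := z₀) (s := Metric.ball z₀ 1) (Metric.ball_mem_nhds z₀ one_pos)
    (F := fun z y => (g y : ℂ) * Complex.exp ((a - y : ℝ) * z))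
    (F' := fun z y => (g y : ℂ) * (Complex.exp ((a - y : ℝ) * z) * ((a - y : ℝ) : ℂ)))
    (bound := fun y => |g y| * (Real.exp (a * (|z₀.re| + 1)) * a))
    ?_ ?_ ?_ ?_ ?_ ?_
  · exact key.2.differentiableAt
  · exact Filter.Eventually.of_forall fun z =>
      (lapPsi_integrand_integrable hg z).aestronglyMeasurable
  · exact lapPsi_integrand_integrable hg z₀
  · apply AEStronglyMeasurable.mul hg.ofReal.aestronglyMeasurable
    apply Continuous.aestronglyMeasurable
    fun_prop
  · filter_upwards [ae_restrict_mem measurableSet_Icc] with y hy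
    intro z hz
    rw [norm_mul, norm_mul, Complex.norm_exp]
    have hre : ((a - y : ℝ) * z : ℂ).re = (a - y) * z.re := by simp
    rw [hre]
    have h1 : (‖((g y : ℝ) : ℂ)‖ : ℝ) = |g y| := by
      simp [Complex.norm_real]
    rw [h1]
    have h2 : ‖((a - y : ℝ) : ℂ)‖ = |a - y| := by
      rw [Complex.norm_real]
      exact Real.norm_eq_abs _
    rw [h2]
    have hay : |a - y| ≤ a := by
      rw [abs_of_nonneg (by linarith [hy.2])]; linarith [hy.1]
    have hzre : z.re ≤ |z₀.re| + 1 := by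
      have := Complex.abs_re_le_norm (z - z₀)
      have hlt : ‖z - z₀‖ < 1 := by
        rw [Metric.mem_ball, dist_eq_norm] at hz
        exact hz
      have : z.re - z₀.re ≤ 1 := by
        calc z.re - z₀.re ≤ |z.re - z₀.re| := le_abs_self _
          _ = |(z - z₀).re| := by simp
          _ ≤ ‖z - z₀‖ := Complex.abs_re_le_norm _
          _ ≤ 1 := hlt.le
      have := le_abs_self z₀.re
      linarith
    have hexp : Real.exp ((a - y) * z.re) ≤ Real.exp (a * (|z₀.re| + 1)) := by
      apply Real.exp_le_exp.2
      calc (a - y) * z.re ≤ a * max z.re 0 := lap_exp_bound hy z.re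
        _ ≤ a * (|z₀.re| + 1) := by
            apply mul_le_mul_of_nonneg_left _ (by linarith [hy.1, hy.2] : (0:ℝ) ≤ a)
            apply max_le hzre (by positivity)
    apply mul_le_mul_of_nonneg_left _ (abs_nonneg _)
    exact mul_le_mul hexp hay (abs_nonneg _) (Real.exp_pos _).le
  · exact (hg.norm.mul_const _)
  · filter_upwards [] with y
    intro z _
    have h := (((hasDerivAt_id z).const_mul (((a - y : ℝ)) : ℂ)).cexp).const_mul ((g y : ℝ) : ℂ)
    simpa using h

lemma lapPsi_bound_right (ha : 0 < a) (hg : IntegrableOn g (Set.Icc 0 a)) {C x₀ : ℝ}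
    (hC : ∀ x ≥ x₀, |∫ y in (0:ℝ)..a, g y * Real.exp (-x * y)| ≤ C * Real.exp (-x * a))
    {x : ℝ} (hx : x₀ ≤ x) : ‖lapPsi a g (x : ℂ)‖ ≤ C := by
  rw [lapPsi_ofReal hg, Complex.norm_real, Real.norm_eq_abs]
  have key : ∫ y in Set.Icc (0:ℝ) a, g y * Real.exp ((a - y) * x)
      = Real.exp (a * x) * ∫ y in (0:ℝ)..a, g y * Real.exp (-x * y) := by
    rw [intervalIntegral.integral_of_le ha.le, ← integral_Icc_eq_integral_Ioc,
      ← integral_const_mul]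
    apply setIntegral_congr_fun measurableSet_Icc
    intro y _
    show g y * Real.exp ((a - y) * x) = Real.exp (a * x) * (g y * Real.exp (-x * y))
    rw [show Real.exp (a * x) * (g y * Real.exp (-x * y))
        = g y * (Real.exp (a * x) * Real.exp (-x * y)) by ring, ← Real.exp_add]
    congr 2
    ring
  rw [key, abs_mul, abs_of_pos (Real.exp_pos _)]
  calc Real.exp (a * x) * |∫ y in (0:ℝ)..a, g y * Real.exp (-x * y)|
      ≤ Real.exp (a * x) * (C * Real.exp (-x * a)) :=
        mul_le_mul_of_nonneg_left (hC x hx) (Real.exp_pos _).le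
    _ = C * (Real.exp (a * x) * Real.exp (-x * a)) := by ring
    _ = C := by rw [← Real.exp_add, show a * x + -x * a = 0 by ring, Real.exp_zero, mul_one]

lemma lapPsi_bounded (ha : 0 < a) (hg : IntegrableOn g (Set.Icc 0 a)) {C x₀ : ℝ}
    (hC : ∀ x ≥ x₀, |∫ y in (0:ℝ)..a, g y * Real.exp (-x * y)| ≤ C * Real.exp (-x * a))
    (z : ℂ) :
    ‖lapPsi a g z‖ ≤ max C ((∫ y in Set.Icc (0:ℝ) a, |g y|) * Real.exp (a * max x₀ 0)) := by
  set I : ℝ := ∫ y in Set.Icc (0:ℝ) a, |g y| with hI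
  have hI0 : 0 ≤ I := setIntegral_nonneg measurableSet_Icc fun y _ => abs_nonneg _
  set x₁ : ℝ := max x₀ 0 with hx₁
  have hx₁0 : 0 ≤ x₁ := le_max_right _ _
  set M : ℝ := max C (I * Real.exp (a * x₁)) with hM
  have hIM : I * Real.exp (a * x₁) ≤ M := le_max_right _ _
  -- bound for re z ≤ x₁
  have hleft : ∀ w : ℂ, w.re ≤ x₁ → ‖lapPsi a g w‖ ≤ M := by
    intro w hw
    calc ‖lapPsi a g w‖ ≤ I * Real.exp (a * max w.re 0) := lapPsi_norm_le hg w
      _ ≤ I * Real.exp (a * x₁) := by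
          apply mul_le_mul_of_nonneg_left _ hI0
          apply Real.exp_le_exp.2
          exact mul_le_mul_of_nonneg_left (max_le hw hx₁0) ha.le
      _ ≤ M := hIM
  by_cases hz : z.re ≤ x₁
  · exact hleft z hz
  push_neg at hz
  -- Phragmen-Lindelof on shifted quadrants
  set f : ℂ → ℂ := fun w => lapPsi a g (w + (x₁ : ℂ)) with hf
  have hd : Differentiable ℂ f := (lapPsi_differentiable hg).comp (differentiable_id.add_const _)
  have hB : ∀ w : ℂ, ‖f w‖ ≤ (I * Real.exp (a * x₁)) * Real.exp (a * ‖w‖ ^ (1:ℝ)) := by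
    intro w
    calc ‖f w‖ ≤ I * Real.exp (a * max (w + (x₁:ℂ)).re 0) := lapPsi_norm_le hg _
      _ ≤ (I * Real.exp (a * x₁)) * Real.exp (a * ‖w‖ ^ (1:ℝ)) := by
          rw [mul_assoc, ← Real.exp_add]
          apply mul_le_mul_of_nonneg_left _ hI0
          apply Real.exp_le_exp.2
          have h1 : (w + (x₁:ℂ)).re = w.re + x₁ := by simp
          have h2 : max (w.re + x₁) 0 ≤ x₁ + ‖w‖ := by
            apply max_le
            · have := Complex.abs_re_le_norm w
              have := le_abs_self w.re
              linarith [le_trans (le_abs_self w.re) (Complex.abs_re_le_norm w)]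
            · positivity
          rw [h1]
          calc a * max (w.re + x₁) 0 ≤ a * (x₁ + ‖w‖) :=
                mul_le_mul_of_nonneg_left h2 ha.le
            _ = a * x₁ + a * ‖w‖ ^ (1:ℝ) := by rw [Real.rpow_one]; ring
  have hBig : ∀ (S : Set ℂ), f =O[Bornology.cobounded ℂ ⊓ 𝓟 S]
      fun w => Real.exp (a * ‖w‖ ^ (1:ℝ)) := by
    intro S
    apply Asymptotics.IsBigO.of_bound (I * Real.exp (a * x₁))
    apply Filter.Eventually.of_forall
    intro w
    rw [Real.norm_eq_abs, abs_of_pos (Real.exp_pos _)]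
    exact hB w
  have hre : ∀ x : ℝ, 0 ≤ x → ‖f x‖ ≤ M := by
    intro x hx0
    have : f (x : ℂ) = lapPsi a g ((x + x₁ : ℝ) : ℂ) := by
      rw [hf]; push_cast; ring_nf
    rw [this]
    refine le_trans (lapPsi_bound_right ha hg hC ?_) (le_max_left _ _)
    have : x₀ ≤ x₁ := le_max_left _ _
    linarith
  have him : ∀ x : ℝ, ‖f ((x : ℂ) * Complex.I)‖ ≤ M := by
    intro x
    have hre' : ((x : ℂ) * Complex.I + (x₁ : ℂ)).re = x₁ := by simp
    calc ‖f ((x : ℂ) * Complex.I)‖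
        ≤ I * Real.exp (a * max ((x : ℂ) * Complex.I + (x₁ : ℂ)).re 0) := lapPsi_norm_le hg _
      _ = I * Real.exp (a * x₁) := by rw [hre', max_eq_left hx₁0]
      _ ≤ M := hIM
  have hzshift : z = (z - (x₁:ℂ)) + (x₁:ℂ) := by ring
  have hzre : 0 ≤ (z - (x₁:ℂ)).re := by simp [hz.le]
  rcases le_total 0 z.im with him0 | him0
  · have := PhragmenLindelof.quadrant_I (hd.diffContOnCl)
      ⟨1, by norm_num, a, hBig _⟩ hre (fun x hx => him x) hzre (by simp [him0])
    rw [hf] at this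
    rw [hzshift]
    exact this
  · have := PhragmenLindelof.quadrant_IV (hd.diffContOnCl)
      ⟨1, by norm_num, a, hBig _⟩ hre (fun x hx => him x) hzre (by simp [him0])
    rw [hf] at this
    rw [hzshift]
    exact this


lemma lapPsi_tendsto_zero (ha : 0 < a) (hg : IntegrableOn g (Set.Icc 0 a)) :
    Tendsto (fun n : ℕ => lapPsi a g (-(n:ℝ) : ℝ)) atTop (𝓝 0) := by
  have h0 : (0 : ℂ) = ∫ y in Set.Icc (0:ℝ) a, (0 : ℂ) := by simp
  rw [h0]
  apply tendsto_integral_of_dominated_convergence (fun y => |g y|)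
  · exact fun n => (lapPsi_integrand_integrable hg _).aestronglyMeasurable
  · exact hg.norm
  · intro n
    filter_upwards [ae_restrict_mem measurableSet_Icc] with y hy
    rw [lapPsi_integrand_norm]
    have : (a - y) * ((-(n:ℝ) : ℝ) : ℂ).re ≤ 0 := by
      have h1 : (0:ℝ) ≤ a - y := by linarith [hy.2]
      have h2 : (((-(n:ℝ) : ℝ)) : ℂ).re = -(n:ℝ) := by simp
      rw [h2]
      have : (0:ℝ) ≤ (n:ℝ) := Nat.cast_nonneg n
      nlinarith
    calc |g y| * Real.exp ((a - y) * ((-(n:ℝ) : ℝ) : ℂ).re)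
        ≤ |g y| * 1 := mul_le_mul_of_nonneg_left
          (Real.exp_le_one_iff.2 this) (abs_nonneg _)
      _ = |g y| := mul_one _
  · have hae : ∀ᵐ y ∂(volume.restrict (Set.Icc (0:ℝ) a)), y ∈ Set.Icc 0 a ∧ y ≠ a := by
      have h1 := ae_restrict_mem (μ := volume) (measurableSet_Icc (a := (0:ℝ)) (b := a))
      have h2 : ∀ᵐ y ∂(volume.restrict (Set.Icc (0:ℝ) a)), y ≠ a := by
        rw [ae_iff]
        have : {y : ℝ | ¬ y ≠ a} = {a} := by ext y; simp
        rw [this]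
        rw [Measure.restrict_apply (measurableSet_singleton a)]
        exact measure_mono_null Set.inter_subset_left Real.volume_singleton
      filter_upwards [h1, h2] with y hy hy' using ⟨hy, hy'⟩
    filter_upwards [hae] with y hy
    rcases hy with ⟨hy, hya⟩
    rw [tendsto_zero_iff_norm_tendsto_zero]
    have heq : (fun n : ℕ => ‖(g y : ℂ) * Complex.exp ((a - y : ℝ) * ((-(n:ℝ) : ℝ) : ℂ))‖)
        = fun n : ℕ => |g y| * (Real.exp (-(a - y))) ^ n := by
      funext n
      rw [lapPsi_integrand_norm]
      congr 1
      rw [← Real.exp_nat_mul]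
      congr 1
      simp
      ring
    rw [heq]
    have hr0 : 0 ≤ Real.exp (-(a - y)) := (Real.exp_pos _).le
    have hr1 : Real.exp (-(a - y)) < 1 := by
      apply Real.exp_lt_one_iff.2
      have : y < a := lt_of_le_of_ne hy.2 hya
      linarith
    have := (tendsto_pow_atTop_nhds_zero_of_lt_one hr0 hr1).const_mul |g y|
    simpa using this

lemma lapPsi_eq_zero (ha : 0 < a) (hg : IntegrableOn g (Set.Icc 0 a)) {C x₀ : ℝ}
    (hC : ∀ x ≥ x₀, |∫ y in (0:ℝ)..a, g y * Real.exp (-x * y)| ≤ C * Real.exp (-x * a))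
    (z : ℂ) : lapPsi a g z = 0 := by
  have hbd : IsBounded (Set.range (lapPsi a g)) := by
    apply isBounded_iff_forall_norm_le.2
    exact ⟨_, by rintro _ ⟨w, rfl⟩; exact lapPsi_bounded ha hg hC w⟩
  have hconst := (lapPsi_differentiable hg).apply_eq_apply_of_bounded hbd
  have hlim := lapPsi_tendsto_zero ha hg (g := g)
  have heq : (fun n : ℕ => lapPsi a g (-(n:ℝ) : ℝ)) = fun _ => lapPsi a g z :=
    funext fun n => hconst _ _
  rw [heq] at hlim
  exact tendsto_nhds_unique tendsto_const_nhds hlim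

lemma lap_real_integral_zero (ha : 0 < a) (hg : IntegrableOn g (Set.Icc 0 a)) {C x₀ : ℝ}
    (hC : ∀ x ≥ x₀, |∫ y in (0:ℝ)..a, g y * Real.exp (-x * y)| ≤ C * Real.exp (-x * a))
    (x : ℝ) : ∫ y in Set.Icc (0:ℝ) a, g y * Real.exp ((a - y) * x) = 0 := by
  have h := lapPsi_eq_zero ha hg hC (x : ℂ)
  have h2 : lapPsi a g x = ((∫ y in Set.Icc (0:ℝ) a, g y * Real.exp ((a - y) * x) : ℝ) : ℂ) :=
    lapPsi_ofReal hg x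
  rw [h2] at h
  exact_mod_cast h


/-- The exponential functions as continuous maps on `Icc 0 a`. -/
noncomputable def lapE (a : ℝ) (x : ℝ) : C(Set.Icc (0:ℝ) a, ℝ) :=
  ⟨fun y => Real.exp ((a - (y : ℝ)) * x), by fun_prop⟩

lemma lapE_mul (a x x' : ℝ) : lapE a x * lapE a x' = lapE a (x + x') := by
  ext y
  show Real.exp ((a - y) * x) * Real.exp ((a - y) * x') = Real.exp ((a - y) * (x + x'))
  rw [← Real.exp_add]
  congr 1
  ring

lemma lapE_zero (a : ℝ) : lapE a 0 = 1 := by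
  ext y
  show Real.exp ((a - y) * 0) = 1
  rw [mul_zero, Real.exp_zero]

lemma lap_integrable_cm (ha : 0 < a) (hg : IntegrableOn g (Set.Icc 0 a))
    (p : C(Set.Icc (0:ℝ) a, ℝ)) :
    IntegrableOn (fun y => p (Set.projIcc 0 a ha.le y) * g y) (Set.Icc 0 a) := by
  apply Integrable.bdd_mul (c := ‖p‖) hg
  · exact (p.continuous.comp continuous_projIcc).aestronglyMeasurable
  · exact Filter.Eventually.of_forall fun y => p.norm_coe_le_norm _

lemma lap_cm_integral_zero (ha : 0 < a) (hg : IntegrableOn g (Set.Icc 0 a))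
    (hzero : ∀ x : ℝ, ∫ y in Set.Icc (0:ℝ) a, g y * Real.exp ((a - y) * x) = 0)
    (p : C(Set.Icc (0:ℝ) a, ℝ))
    (hp : p ∈ Algebra.adjoin ℝ (Set.range (lapE a))) :
    ∫ y in Set.Icc (0:ℝ) a, p (Set.projIcc 0 a ha.le y) * g y = 0 := by
  -- the range of lapE is a submonoid
  set T : Submonoid C(Set.Icc (0:ℝ) a, ℝ) :=
    { carrier := Set.range (lapE a)
      one_mem' := ⟨0, lapE_zero a⟩
      mul_mem' := by rintro _ _ ⟨x, rfl⟩ ⟨x', rfl⟩; exact ⟨x + x', (lapE_mul a x x').symm⟩ }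
  have hp' : p ∈ Submodule.span ℝ ((Submonoid.closure (Set.range (lapE a)) : Submonoid _) :
      Set C(Set.Icc (0:ℝ) a, ℝ)) := by
    have h1 : p ∈ Subalgebra.toSubmodule (Algebra.adjoin ℝ (Set.range (lapE a))) := hp
    rwa [Algebra.adjoin_eq_span] at h1
  have hte : ∀ x : ℝ, ∫ y in Set.Icc (0:ℝ) a,
      (lapE a x) (Set.projIcc 0 a ha.le y) * g y = 0 := by
    intro x
    refine Eq.trans ?_ (hzero x)
    apply setIntegral_congr_fun measurableSet_Icc
    intro y hy
    have : Set.projIcc 0 a ha.le y = ⟨y, hy⟩ := Set.projIcc_of_mem ha.le hy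
    show (lapE a x) (Set.projIcc 0 a ha.le y) * g y = g y * Real.exp ((a - y) * x)
    rw [this]
    show Real.exp ((a - y) * x) * g y = g y * Real.exp ((a - y) * x)
    ring
  clear hp
  induction hp' using Submodule.span_induction with
  | mem q hq =>
      have hqT : q ∈ T := Submonoid.closure_le.2 (le_refl _) hq
      obtain ⟨x, rfl⟩ := hqT
      exact hte x
  | zero => simp
  | add q r hq hr ihq ihr =>
      have h1 : (fun y => (q + r) (Set.projIcc 0 a ha.le y) * g y)
          = fun y => q (Set.projIcc 0 a ha.le y) * g y + r (Set.projIcc 0 a ha.le y) * g y := by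
        funext y
        show (q _ + r _) * g y = _
        ring
      rw [h1, integral_add (lap_integrable_cm ha hg q) (lap_integrable_cm ha hg r), ihq, ihr,
        add_zero]
  | smul c q hq ihq =>
      have h1 : (fun y => (c • q) (Set.projIcc 0 a ha.le y) * g y)
          = fun y => c * (q (Set.projIcc 0 a ha.le y) * g y) := by
        funext y
        show (c * q _) * g y = _
        ring
      rw [h1, integral_const_mul, ihq, mul_zero]

lemma lapE_separates (ha : 0 < a) :
    (Algebra.adjoin ℝ (Set.range (lapE a))).SeparatesPoints := by
  intro y y' hne
  refine ⟨_, ⟨lapE a 1, Algebra.subset_adjoin ⟨1, rfl⟩, rfl⟩, ?_⟩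
  show Real.exp ((a - y) * 1) ≠ Real.exp ((a - y') * 1)
  intro h
  rw [Real.exp_eq_exp] at h
  apply hne
  apply Subtype.ext
  have : (y : ℝ) = y' := by
    have := h
    nlinarith [this]
  exact this


lemma lap_final (ha : 0 < a) (hg : IntegrableOn g (Set.Icc 0 a))
    (hzero : ∀ x : ℝ, ∫ y in Set.Icc (0:ℝ) a, g y * Real.exp ((a - y) * x) = 0) :
    ∀ᵐ y ∂(volume.restrict (Set.Icc 0 a)), g y = 0 := by
  apply ae_eq_zero_of_integral_contDiff_smul_eq_zero (μ := volume.restrict (Set.Icc 0 a))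
    hg.locallyIntegrable
  intro φ hφ hφc
  simp only [smul_eq_mul]
  have hint_φg : IntegrableOn (fun y => φ y * g y) (Set.Icc 0 a) := by
    obtain ⟨B, hB⟩ := (isCompact_Icc (a := (0:ℝ)) (b := a)).exists_bound_of_continuousOn
      hφ.continuous.continuousOn
    apply Integrable.bdd_mul (c := B) hg hφ.continuous.aestronglyMeasurable
    filter_upwards [ae_restrict_mem measurableSet_Icc] with y hy using hB y hy
  set J : ℝ := ∫ y in Set.Icc (0:ℝ) a, |g y| with hJ
  have hJ0 : 0 ≤ J := setIntegral_nonneg measurableSet_Icc fun y _ => abs_nonneg _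
  have key : ∀ ε > (0:ℝ), |∫ y in Set.Icc (0:ℝ) a, φ y * g y| ≤ ε * J := by
    intro ε hε
    obtain ⟨⟨p, hpA⟩, hp⟩ :=
      ContinuousMap.exists_mem_subalgebra_near_continuous_of_separatesPoints
        (Algebra.adjoin ℝ (Set.range (lapE a))) (lapE_separates ha)
        (fun y : Set.Icc (0:ℝ) a => φ y)
        (hφ.continuous.comp continuous_subtype_val) ε hε
    have hzero_p := lap_cm_integral_zero ha hg hzero p hpA
    have hint_pg := lap_integrable_cm ha hg p
    have hsplit : ∫ y in Set.Icc (0:ℝ) a, φ y * g y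
        = ∫ y in Set.Icc (0:ℝ) a, (φ y - p (Set.projIcc 0 a ha.le y)) * g y := by
      have h1 : (fun y => (φ y - p (Set.projIcc 0 a ha.le y)) * g y)
          = fun y => φ y * g y - p (Set.projIcc 0 a ha.le y) * g y := by
        funext y; ring
      rw [h1, integral_sub hint_φg hint_pg, hzero_p, sub_zero]
    rw [hsplit]
    have h2 : |∫ y in Set.Icc (0:ℝ) a, (φ y - p (Set.projIcc 0 a ha.le y)) * g y|
        ≤ ∫ y in Set.Icc (0:ℝ) a, ‖(φ y - p (Set.projIcc 0 a ha.le y)) * g y‖ := by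
      rw [← Real.norm_eq_abs]
      exact norm_integral_le_integral_norm _
    refine h2.trans ?_
    have h3 : ∫ y in Set.Icc (0:ℝ) a, ‖(φ y - p (Set.projIcc 0 a ha.le y)) * g y‖
        ≤ ∫ y in Set.Icc (0:ℝ) a, ε * |g y| := by
      have hint1 : IntegrableOn (fun y => ‖(φ y - p (Set.projIcc 0 a ha.le y)) * g y‖)
          (Set.Icc 0 a) := by
        refine (hint_φg.sub hint_pg).norm.congr (Filter.Eventually.of_forall fun y => ?_)
        simp only [Pi.sub_apply]
        congr 1
        ring
      have hint2 : IntegrableOn (fun y => ε * |g y|) (Set.Icc 0 a) := by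
        refine (hg.norm.const_mul ε).congr (Filter.Eventually.of_forall fun y => ?_)
        simp [Real.norm_eq_abs]
      apply setIntegral_mono_on hint1 hint2 measurableSet_Icc
      intro y hy
      rw [norm_mul, Real.norm_eq_abs, Real.norm_eq_abs]
      have hproj : Set.projIcc 0 a ha.le y = ⟨y, hy⟩ := Set.projIcc_of_mem ha.le hy
      have := hp ⟨y, hy⟩
      rw [Real.norm_eq_abs] at this
      have hbd : |φ y - p (Set.projIcc 0 a ha.le y)| ≤ ε := by
        rw [hproj, abs_sub_comm]
        exact this.le
      exact mul_le_mul_of_nonneg_right hbd (abs_nonneg _)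
    refine h3.trans ?_
    rw [integral_const_mul]
  have habs : |∫ y in Set.Icc (0:ℝ) a, φ y * g y| ≤ 0 := by
    by_contra h
    push_neg at h
    set V := |∫ y in Set.Icc (0:ℝ) a, φ y * g y| with hV
    have hkey := key (V / (J + 1)) (by positivity)
    have : V / (J + 1) * J < V := by
      rw [div_mul_eq_mul_div, div_lt_iff₀ (by linarith)]
      nlinarith
    linarith
  have := abs_nonneg (∫ y in Set.Icc (0:ℝ) a, φ y * g y)
  have : |∫ y in Set.Icc (0:ℝ) a, φ y * g y| = 0 := le_antisymm habs this
  exact abs_eq_zero.1 this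

end LaplaceAux

/-- If `g ∈ L¹([0,a])` and `∫₀ᵃ g(y) e^{-xy} dy = O(e^{-xa})` as `x → ∞`,
then `g = 0` a.e. on `[0,a]`. -/
theorem finite_laplace_transform_decay_implies_zero
    (a : ℝ) (ha : 0 < a) (g : ℝ → ℝ)
    (hg : IntegrableOn g (Set.Icc 0 a))
    (hO : ∃ C > (0:ℝ), ∃ x₀ : ℝ, ∀ x ≥ x₀,
      |∫ y in (0:ℝ)..a, g y * Real.exp (-x * y)| ≤ C * Real.exp (-x * a)) :
    ∀ᵐ y ∂(volume.restrict (Set.Icc 0 a)), g y = 0 := by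
  obtain ⟨C, hCpos, x₀, hC⟩ := hO
  exact lap_final ha hg (fun x => lap_real_integral_zero ha hg hC x)
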